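/- Transfer of frame definability from K to KbiG and KG²: let 𝕂 be a class of crisp frames definable in the classical modal logic K by a set Σ of classical modal formulas (i.e. F ∈ 𝕂 iff F ⊨_K σ for all σ ∈ Σ), and let Σ^∼ = {σ^∼ : σ ∈ Σ}, where σ^∼ replaces each propositional variable p of σ by ∼∼p. Then 𝕂 is definable in KbiG and in KG²: for every crisp frame F, F ∈ 𝕂 iff F ⊨_{KbiG} σ^∼ for all σ ∈ Σ, and F ∈ 𝕂 iff F ⊨_{KG²} σ^∼ for all σ ∈ Σ. -/

import Mathlib

/- Truth values: the real unit interval [0,1] with its complete lattice structure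
   (so `sInf ∅ = 1` and `sSup ∅ = 0`). -/
instance : Fact ((0:ℝ) ≤ 1) := ⟨zero_le_one⟩

abbrev TV : Type := unitInterval

/-- Gödel implication: `a →G b = 1` if `a ≤ b`, else `b`. -/
noncomputable def gimp (a b : TV) : TV := if a ≤ b then 1 else b

/-- Gödel coimplication: `a ⧀G b = 0` if `a ≤ b`, else `a`. -/
noncomputable def gcoimp (a b : TV) : TV := if a ≤ b then 0 else a

/-- Formulas of `biL¬_{□,◇}` over the countable variable set `ℕ`. -/
inductive Formula : Type
  | var : ℕ → Formula
  | neg : Formula → Formula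
  | and : Formula → Formula → Formula
  | or : Formula → Formula → Formula
  | imp : Formula → Formula → Formula
  | coimp : Formula → Formula → Formula
  | box : Formula → Formula
  | dia : Formula → Formula

/-- KG² valuation pair `(v₁, v₂)` on a crisp frame `(W, R)`:
`(kval R v φ w).1 = v₁(φ,w)` and `(kval R v φ w).2 = v₂(φ,w)`. -/
noncomputable def kval {W : Type} (R : W → W → Prop) (v : ℕ → W → TV × TV) :
    Formula → W → TV × TV
  | .var p, w => v p w
  | .neg φ, w => ((kval R v φ w).2, (kval R v φ w).1)
  | .and φ ψ, w => ((kval R v φ w).1 ⊓ (kval R v ψ w).1, (kval R v φ w).2 ⊔ (kval R v ψ w).2)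
  | .or φ ψ, w => ((kval R v φ w).1 ⊔ (kval R v ψ w).1, (kval R v φ w).2 ⊓ (kval R v ψ w).2)
  | .imp φ ψ, w =>
      (gimp (kval R v φ w).1 (kval R v ψ w).1, gcoimp (kval R v ψ w).2 (kval R v φ w).2)
  | .coimp φ ψ, w =>
      (gcoimp (kval R v φ w).1 (kval R v ψ w).1, gimp (kval R v ψ w).2 (kval R v φ w).2)
  | .box φ, w =>
      (sInf ((fun w' => (kval R v φ w').1) '' {w' | R w w'}),
       sSup ((fun w' => (kval R v φ w').2) '' {w' | R w w'}))
  | .dia φ, w =>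
      (sSup ((fun w' => (kval R v φ w').1) '' {w' | R w w'}),
       sInf ((fun w' => (kval R v φ w').2) '' {w' | R w w'}))

/-- ¬-free formulas: the language `biL_{□,◇}` over the countable variable set `ℕ`. -/
inductive FormulaB : Type
  | var : ℕ → FormulaB
  | and : FormulaB → FormulaB → FormulaB
  | or : FormulaB → FormulaB → FormulaB
  | imp : FormulaB → FormulaB → FormulaB
  | coimp : FormulaB → FormulaB → FormulaB
  | box : FormulaB → FormulaB
  | dia : FormulaB → FormulaB

/-- KbiG valuation on a crisp frame `(W, R)` (`inf ∅ = 1`, `sup ∅ = 0`). -/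
noncomputable def bval {W : Type} (R : W → W → Prop) (v : ℕ → W → TV) :
    FormulaB → W → TV
  | .var p, w => v p w
  | .and φ ψ, w => bval R v φ w ⊓ bval R v ψ w
  | .or φ ψ, w => bval R v φ w ⊔ bval R v ψ w
  | .imp φ ψ, w => gimp (bval R v φ w) (bval R v ψ w)
  | .coimp φ ψ, w => gcoimp (bval R v φ w) (bval R v ψ w)
  | .box φ, w => sInf ((fun w' => bval R v φ w') '' {w' | R w w'})
  | .dia φ, w => sSup ((fun w' => bval R v φ w') '' {w' | R w w'})

/-- Embedding of the ¬-free language `biL_{□,◇}` into `biL¬_{□,◇}`. -/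
def FormulaB.emb : FormulaB → Formula
  | .var p => .var p
  | .and φ ψ => .and φ.emb ψ.emb
  | .or φ ψ => .or φ.emb ψ.emb
  | .imp φ ψ => .imp φ.emb ψ.emb
  | .coimp φ ψ => .coimp φ.emb ψ.emb
  | .box φ => .box φ.emb
  | .dia φ => .dia φ.emb

/-- `𝟏 := p → p`. -/
def bone : FormulaB := .imp (.var 0) (.var 0)

/-- `𝟎 := p ⧀ p`. -/
def bzero : FormulaB := .coimp (.var 0) (.var 0)

/-- Gödel negation `∼φ := φ → 𝟎`. -/
def bnegG (φ : FormulaB) : FormulaB := .imp φ bzero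

/-- Baaz delta `Δτ := ∼(𝟏 ⧀ τ)`. -/
def bDelta (τ : FormulaB) : FormulaB := bnegG (.coimp bone τ)

/-- The formula `𝟏 ⧀ ◇((p ⧀ q) ∧ q)` with `p := var 0`, `q := var 1`. -/
def phiFin : FormulaB := .coimp bone (.dia (.and (.coimp (.var 0) (.var 1)) (.var 1)))

/-- Classical modal formulas: built from variables and `𝟎` using `∧, ∨, →, □, ◇`. -/
inductive CForm : Type
  | fls : CForm
  | var : ℕ → CForm
  | and : CForm → CForm → CForm
  | or : CForm → CForm → CForm
  | imp : CForm → CForm → CForm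
  | box : CForm → CForm
  | dia : CForm → CForm

/-- Standard two-valued Kripke semantics on a crisp frame `(W, R)`. -/
def cval {W : Type} (R : W → W → Prop) (v : ℕ → W → Prop) : CForm → W → Prop
  | .fls, _ => False
  | .var p, w => v p w
  | .and φ ψ, w => cval R v φ w ∧ cval R v ψ w
  | .or φ ψ, w => cval R v φ w ∨ cval R v ψ w
  | .imp φ ψ, w => cval R v φ w → cval R v ψ w
  | .box φ, w => ∀ w', R w w' → cval R v φ w'
  | .dia φ, w => ∃ w', R w w' ∧ cval R v φ w'

/-- The translation `φ ↦ φ^∼` replacing every variable `p` by `∼∼p`. -/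
def CForm.trans : CForm → FormulaB
  | .fls => bzero
  | .var p => bnegG (bnegG (.var p))
  | .and φ ψ => .and φ.trans ψ.trans
  | .or φ ψ => .or φ.trans ψ.trans
  | .imp φ ψ => .imp φ.trans ψ.trans
  | .box φ => .box φ.trans
  | .dia φ => .dia φ.trans

/-- A crisp frame: a nonempty type of worlds with a binary accessibility relation. -/
structure CFrame : Type 1 where
  W : Type
  ne : Nonempty W
  R : W → W → Prop

/-- Validity of a classical modal formula on a crisp frame. -/
def CFrame.validK (F : CFrame) (φ : CForm) : Prop :=
  ∀ (v : ℕ → F.W → Prop) (w : F.W), cval F.R v φ w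

/-- KbiG-validity of a `biL_{□,◇}` formula on a crisp frame. -/
def CFrame.validKbiG (F : CFrame) (φ : FormulaB) : Prop :=
  ∀ (v : ℕ → F.W → TV) (w : F.W), bval F.R v φ w = 1

/-- KG²-validity of a `biL¬_{□,◇}` formula on a crisp frame. -/
def CFrame.validKG2 (F : CFrame) (φ : Formula) : Prop :=
  ∀ (v : ℕ → F.W → TV × TV) (w : F.W),
    (kval F.R v φ w).1 = 1 ∧ (kval F.R v φ w).2 = 0

/-! ### Auxiliary lemmas -/

open Classical in
noncomputable instance : DecidableEq TV := inferInstance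

lemma tv_one_top : (1 : TV) = ⊤ := Subtype.ext rfl
lemma tv_zero_bot : (0 : TV) = ⊥ := Subtype.ext rfl
lemma tv_zero_ne_one : (0 : TV) ≠ 1 := fun h => zero_ne_one (congrArg Subtype.val h)
lemma tv_zero_le_one : (0 : TV) ≤ 1 := by rw [tv_zero_bot]; exact bot_le
lemma tv_not_one_le_zero : ¬ (1 : TV) ≤ 0 :=
  fun h => tv_zero_ne_one (le_antisymm tv_zero_le_one h)
lemma tv_le_zero_iff {a : TV} : a ≤ 0 ↔ a = 0 := by
  rw [tv_zero_bot]; exact le_bot_iff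
lemma tv_one_le_iff {a : TV} : 1 ≤ a ↔ a = 1 := by
  rw [tv_one_top]; exact top_le_iff

lemma tv_sInf_all_one {s : Set TV} (h : ∀ x ∈ s, x = 1) : sInf s = 1 := by
  rw [tv_one_top, sInf_eq_top]; intro x hx; rw [← tv_one_top]; exact h x hx
lemma tv_sInf_zero_mem {s : Set TV} (h : (0:TV) ∈ s) : sInf s = 0 :=
  le_antisymm (tv_le_zero_iff.mp (sInf_le h) ▸ le_rfl) (by rw [tv_zero_bot]; exact bot_le)
lemma tv_sSup_all_zero {s : Set TV} (h : ∀ x ∈ s, x = 0) : sSup s = 0 := by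
  rw [tv_zero_bot, sSup_eq_bot]; intro x hx; rw [← tv_zero_bot]; exact h x hx
lemma tv_sSup_one_mem {s : Set TV} (h : (1:TV) ∈ s) : sSup s = 1 :=
  le_antisymm (by rw [tv_one_top]; exact le_top) (le_sSup h)

open Classical in
/-- Crispness and classical behaviour of the translation under KbiG semantics. -/
lemma bval_trans {W : Type} (R : W → W → Prop) (v : ℕ → W → TV) (σ : CForm) (w : W) :
    bval R v σ.trans w = if cval R (fun p w => v p w ≠ 0) σ w then 1 else 0 := by
  induction σ generalizing w with
  | fls => simp [CForm.trans, bzero, bval, gcoimp, cval]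
  | var p =>
    simp only [CForm.trans, bnegG, bzero, bval, gimp, gcoimp, le_refl, if_true, cval]
    by_cases h : v p w = 0
    · simp [h, le_refl, tv_not_one_le_zero]
    · rw [if_neg (fun hle => h (tv_le_zero_iff.mp hle)), if_pos le_rfl]; exact (if_pos h).symm
  | and φ ψ ihφ ihψ =>
    simp only [CForm.trans, bval, cval, ihφ, ihψ]
    split_ifs with h1 h2 h3 <;> simp_all [inf_idem]
  | or φ ψ ihφ ihψ =>
    simp only [CForm.trans, bval, cval, ihφ, ihψ]
    split_ifs with h1 h2 h3 <;> simp_all [sup_idem]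
  | imp φ ψ ihφ ihψ =>
    simp only [CForm.trans, bval, cval, gimp, ihφ, ihψ]
    split_ifs with h1 h2 h3 <;> simp_all [le_refl, tv_zero_le_one, tv_not_one_le_zero]
  | box φ ihφ =>
    simp only [CForm.trans, bval, cval]
    by_cases h : ∀ w', R w w' → cval R (fun p w => v p w ≠ 0) φ w'
    · refine (?_ : _ = (1:TV)).trans (if_pos h).symm
      apply tv_sInf_all_one
      rintro x ⟨w', hw', rfl⟩
      simp only []; rw [ihφ, if_pos (h w' hw')]
    · refine (?_ : _ = (0:TV)).trans (if_neg h).symm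
      push_neg at h
      obtain ⟨w', hw', hc⟩ := h
      apply tv_sInf_zero_mem
      exact ⟨w', hw', by simp only []; rw [ihφ, if_neg hc]⟩
  | dia φ ihφ =>
    simp only [CForm.trans, bval, cval]
    by_cases h : ∃ w', R w w' ∧ cval R (fun p w => v p w ≠ 0) φ w'
    · refine (?_ : _ = (1:TV)).trans (if_pos h).symm
      obtain ⟨w', hw', hc⟩ := h
      exact tv_sSup_one_mem ⟨w', hw', by simp only []; rw [ihφ, if_pos hc]⟩
    · refine (?_ : _ = (0:TV)).trans (if_neg h).symm
      push_neg at h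
      apply tv_sSup_all_zero
      rintro x ⟨w', hw', rfl⟩
      simp only []; rw [ihφ, if_neg (h w' hw')]

/-- The first component of `kval` on ¬-free formulas is the KbiG valuation. -/
lemma kval_emb_fst {W : Type} (R : W → W → Prop) (v : ℕ → W → TV × TV) (φ : FormulaB)
    (w : W) : (kval R v φ.emb w).1 = bval R (fun p w => (v p w).1) φ w := by
  induction φ generalizing w <;> simp [FormulaB.emb, kval, bval, *]

open Classical in
/-- Classical behaviour of the second component of `kval` on translated formulas. -/
lemma kval_trans_snd {W : Type} (R : W → W → Prop) (v : ℕ → W → TV × TV) (σ : CForm)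
    (w : W) :
    (kval R v σ.trans.emb w).2
      = if cval R (fun p w => (v p w).2 ≠ 1) σ w then 0 else 1 := by
  induction σ generalizing w with
  | fls => simp [CForm.trans, FormulaB.emb, bzero, kval, gimp, cval]
  | var p =>
    simp only [CForm.trans, FormulaB.emb, bnegG, bzero, kval, gimp, gcoimp, le_refl,
      if_true, cval]
    by_cases h : (v p w).2 = 1
    · rw [if_pos h.ge, if_neg tv_not_one_le_zero]
      exact (if_neg (show ¬((v p w).2 ≠ 1) from not_not.mpr h)).symm
    · rw [if_neg (fun hle => h (tv_one_le_iff.mp hle)), if_pos le_rfl]; exact (if_pos h).symm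
  | and φ ψ ihφ ihψ =>
    simp only [CForm.trans, FormulaB.emb, kval, cval, ihφ, ihψ]
    split_ifs with h1 h2 h3 <;> simp_all [sup_idem]
  | or φ ψ ihφ ihψ =>
    simp only [CForm.trans, FormulaB.emb, kval, cval, ihφ, ihψ]
    split_ifs with h1 h2 h3 <;> simp_all [inf_idem]
  | imp φ ψ ihφ ihψ =>
    simp only [CForm.trans, FormulaB.emb, kval, cval, gcoimp, ihφ, ihψ]
    split_ifs with h1 h2 h3 <;> simp_all [le_refl, tv_zero_le_one, tv_not_one_le_zero]
  | box φ ihφ =>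
    simp only [CForm.trans, FormulaB.emb, kval, cval]
    by_cases h : ∀ w', R w w' → cval R (fun p w => (v p w).2 ≠ 1) φ w'
    · refine (?_ : _ = (0:TV)).trans (if_pos h).symm
      apply tv_sSup_all_zero
      rintro x ⟨w', hw', rfl⟩
      simp only []; rw [ihφ, if_pos (h w' hw')]
    · refine (?_ : _ = (1:TV)).trans (if_neg h).symm
      push_neg at h
      obtain ⟨w', hw', hc⟩ := h
      apply tv_sSup_one_mem
      exact ⟨w', hw', by simp only []; rw [ihφ, if_neg hc]⟩
  | dia φ ihφ =>
    simp only [CForm.trans, FormulaB.emb, kval, cval]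
    by_cases h : ∃ w', R w w' ∧ cval R (fun p w => (v p w).2 ≠ 1) φ w'
    · refine (?_ : _ = (0:TV)).trans (if_pos h).symm
      obtain ⟨w', hw', hc⟩ := h
      exact tv_sInf_zero_mem ⟨w', hw', by simp only []; rw [ihφ, if_pos hc]⟩
    · refine (?_ : _ = (1:TV)).trans (if_neg h).symm
      push_neg at h
      apply tv_sInf_all_one
      rintro x ⟨w', hw', rfl⟩
      simp only []; rw [ihφ, if_neg (h w' hw')]

/-- `cval` only depends on the valuation extensionally. -/
lemma cval_congr {W : Type} (R : W → W → Prop) {v v' : ℕ → W → Prop}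
    (h : ∀ p w, v p w ↔ v' p w) : ∀ σ w, cval R v σ w ↔ cval R v' σ w := by
  intro σ
  induction σ <;> intro w <;> simp only [cval] <;>
    first
      | exact h _ w
      | (constructor <;> intro hh <;> simp_all)

/-- transfer of frame definability from classical `K` to KbiG and KG²:
if `𝕂` is defined in `K` by `S`, then `𝕂` is defined in KbiG and in KG² by
`S^∼ = {σ^∼ : σ ∈ S}`. -/
theorem stmt19 (K : Set CFrame) (S : Set CForm)
    (hdef : ∀ F : CFrame, F ∈ K ↔ ∀ σ ∈ S, F.validK σ) :
    (∀ F : CFrame, F ∈ K ↔ ∀ σ ∈ S, F.validKbiG σ.trans) ∧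
    (∀ F : CFrame, F ∈ K ↔ ∀ σ ∈ S, F.validKG2 σ.trans.emb) := by
  classical
  -- Backward extraction: from `bval σ.trans = 1` under the 0/1 valuation induced by `u`,
  -- recover classical truth.
  have key : ∀ (F : CFrame) (σ : CForm) (u : ℕ → F.W → Prop) (w : F.W)
      (v : ℕ → F.W → TV), (∀ p w, v p w ≠ 0 ↔ u p w) →
      bval F.R v σ.trans w = 1 → cval F.R u σ w := by
    intro F σ u w v hv h1
    rw [bval_trans] at h1
    by_cases hc : cval F.R (fun p w => v p w ≠ 0) σ w
    · exact (cval_congr F.R hv σ w).mp hc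
    · rw [if_neg hc] at h1; exact absurd h1 tv_zero_ne_one
  constructor
  · intro F
    rw [hdef F]
    constructor
    · intro hK σ hσ v w
      rw [bval_trans, if_pos (hK σ hσ _ w)]
    · intro hv σ hσ u w
      refine key F σ u w (fun p w => if u p w then 1 else 0) ?_ (hv σ hσ _ w)
      intro p w
      by_cases h : u p w <;> simp [h, tv_zero_ne_one]
  · intro F
    rw [hdef F]
    constructor
    · intro hK σ hσ v w
      constructor
      · rw [kval_emb_fst, bval_trans, if_pos (hK σ hσ _ w)]
      · rw [kval_trans_snd, if_pos (hK σ hσ _ w)]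
    · intro hv σ hσ u w
      refine key F σ u w (fun p w => if u p w then 1 else 0) ?_ ?_
      · intro p w
        by_cases h : u p w <;> simp [h, tv_zero_ne_one]
      · have := (hv σ hσ (fun p w => (if u p w then 1 else 0, 0)) w).1
        rwa [kval_emb_fst] at this
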